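/- Let L be a finite-dimensional minimal nonnilpotent left Leibniz algebra. Then there exists x ∈ L and a₀,...,a_k ∈ L such that [x,aᵢ] = a_{i+1} for 0 ≤ i < k and [x,a_k] = c₀a₀ + ⋯ + c_k a_k with c₀ ≠ 0, and the polynomial p(λ) = λ^{k+1} − c_kλ^k − ⋯ − c₁λ − c₀ is irreducible over the base field. -/

import Mathlib

set_option linter.unnecessarySimpa false

/-- The left Leibniz identity for a bilinear bracket `B`. -/
def LeibnizId {F L : Type*} [Field F] [AddCommGroup L] [Module F L]
    (B : L →ₗ[F] L →ₗ[F] L) : Prop :=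
  ∀ a b c : L, B a (B b c) = B (B a b) c + B b (B a c)

/-- The span of all brackets `[s,t]` with `s ∈ S`, `t ∈ T`. -/
def lbrk {F L : Type*} [Field F] [AddCommGroup L] [Module F L]
    (B : L →ₗ[F] L →ₗ[F] L) (S T : Submodule F L) : Submodule F L :=
  Submodule.span F {z : L | ∃ s ∈ S, ∃ t ∈ T, z = B s t}

/-- A subspace closed under the bracket. -/
def IsLeibSubalg {F L : Type*} [Field F] [AddCommGroup L] [Module F L]
    (B : L →ₗ[F] L →ₗ[F] L) (S : Submodule F L) : Prop :=
  ∀ x ∈ S, ∀ y ∈ S, B x y ∈ S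

/-- A (two-sided) ideal. -/
def IsLeibIdeal {F L : Type*} [Field F] [AddCommGroup L] [Module F L]
    (B : L →ₗ[F] L →ₗ[F] L) (S : Submodule F L) : Prop :=
  (∀ x : L, ∀ y ∈ S, B x y ∈ S) ∧ (∀ y ∈ S, ∀ x : L, B y x ∈ S)

/-- Lower central series: `L^1 = L`, `L^{n+1} = [L, L^n]`. -/
def leibLCS {F L : Type*} [Field F] [AddCommGroup L] [Module F L]
    (B : L →ₗ[F] L →ₗ[F] L) : ℕ → Submodule F L
  | 0 => ⊤
  | n + 1 => lbrk B ⊤ (leibLCS B n)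

def LeibIsNilpotent {F L : Type*} [Field F] [AddCommGroup L] [Module F L]
    (B : L →ₗ[F] L →ₗ[F] L) : Prop :=
  ∃ n, leibLCS B n = ⊥

/-- Lower central series of a subalgebra `S`. -/
def leibLCSIn {F L : Type*} [Field F] [AddCommGroup L] [Module F L]
    (B : L →ₗ[F] L →ₗ[F] L) (S : Submodule F L) : ℕ → Submodule F L
  | 0 => S
  | n + 1 => lbrk B S (leibLCSIn B S n)

/-- A subalgebra `S` is nilpotent (as an algebra in its own right). -/
def LeibSubalgNilpotent {F L : Type*} [Field F] [AddCommGroup L] [Module F L]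
    (B : L →ₗ[F] L →ₗ[F] L) (S : Submodule F L) : Prop :=
  ∃ n, leibLCSIn B S n = ⊥

/-- Derived series. -/
def leibDerived {F L : Type*} [Field F] [AddCommGroup L] [Module F L]
    (B : L →ₗ[F] L →ₗ[F] L) : ℕ → Submodule F L
  | 0 => ⊤
  | n + 1 => lbrk B (leibDerived B n) (leibDerived B n)

def LeibIsSolvable {F L : Type*} [Field F] [AddCommGroup L] [Module F L]
    (B : L →ₗ[F] L →ₗ[F] L) : Prop :=
  ∃ n, leibDerived B n = ⊥

/-- The normalizer of a subspace `S`: elements `x` with `[x,S] ⊆ S` and `[S,x] ⊆ S`. -/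
def leibNormalizer {F L : Type*} [Field F] [AddCommGroup L] [Module F L]
    (B : L →ₗ[F] L →ₗ[F] L) (S : Submodule F L) : Submodule F L where
  carrier := {x : L | ∀ m ∈ S, B x m ∈ S ∧ B m x ∈ S}
  add_mem' := by
    intro x y hx hy m hm
    constructor
    · have := S.add_mem (hx m hm).1 (hy m hm).1
      simpa [map_add] using this
    · have := S.add_mem (hx m hm).2 (hy m hm).2
      simpa [map_add] using this
  zero_mem' := by
    intro m hm
    constructor
    · simpa [map_zero] using S.zero_mem
    · simpa [map_zero] using S.zero_mem
  smul_mem' := by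
    intro c x hx m hm
    constructor
    · have := S.smul_mem c (hx m hm).1
      simpa [map_smul] using this
    · have := S.smul_mem c (hx m hm).2
      simpa [map_smul] using this

/-- `Leib(L)`: the span of all squares. -/
def leibLeib {F L : Type*} [Field F] [AddCommGroup L] [Module F L]
    (B : L →ₗ[F] L →ₗ[F] L) : Submodule F L :=
  Submodule.span F {z : L | ∃ y : L, z = B y y}

/-- A maximal (proper) subalgebra. -/
def IsMaxSubalg {F L : Type*} [Field F] [AddCommGroup L] [Module F L]
    (B : L →ₗ[F] L →ₗ[F] L) (S : Submodule F L) : Prop :=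
  IsLeibSubalg B S ∧ S ≠ ⊤ ∧ ∀ T : Submodule F L, IsLeibSubalg B T → S < T → T = ⊤

/-- `N` is the core of `M`: the largest ideal of `L` contained in `M`. -/
def IsCore {F L : Type*} [Field F] [AddCommGroup L] [Module F L]
    (B : L →ₗ[F] L →ₗ[F] L) (M N : Submodule F L) : Prop :=
  IsLeibIdeal B N ∧ N ≤ M ∧ ∀ C : Submodule F L, IsLeibIdeal B C → C ≤ M → C ≤ N

/-- Minimal nonnilpotent: nonnilpotent, solvable, all proper subalgebras nilpotent. -/
def MinNonnilpotent {F L : Type*} [Field F] [AddCommGroup L] [Module F L]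
    (B : L →ₗ[F] L →ₗ[F] L) : Prop :=
  ¬ LeibIsNilpotent B ∧ LeibIsSolvable B ∧
    ∀ S : Submodule F L, IsLeibSubalg B S → S ≠ ⊤ → LeibSubalgNilpotent B S

/-- Cyclic: generated as an algebra by a single element. -/
def LeibCyclic {F L : Type*} [Field F] [AddCommGroup L] [Module F L]
    (B : L →ₗ[F] L →ₗ[F] L) : Prop :=
  ∃ z : L, ∀ S : Submodule F L, IsLeibSubalg B S → z ∈ S → S = ⊤


section EngelAux
open Polynomial

lemma exists_irred_factor {F L : Type*} [Field F] [AddCommGroup L] [Module F L]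
    [FiniteDimensional F L] (T : Module.End F L) (hT : ¬ IsNilpotent T) :
    ∃ p : F[X], Irreducible p ∧ p.Monic ∧ p.coeff 0 ≠ 0 ∧
      ∃ v : L, v ≠ 0 ∧ (aeval T p) v = 0 := by
  have hnt : Nontrivial L := by
    by_contra h
    rw [not_nontrivial_iff_subsingleton] at h
    exact hT ⟨1, Subsingleton.elim (α := Module.End F L) _ _⟩
  have hint : IsIntegral F T := LinearMap.isIntegral T
  set m := minpoly F T with hm
  have hm0 : m ≠ 0 := minpoly.ne_zero hint
  obtain ⟨r, hmr, hXr⟩ := m.exists_eq_pow_rootMultiplicity_mul_and_not_dvd hm0 0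
  rw [map_zero, sub_zero] at hmr hXr
  -- r is not a unit
  have hrnu : ¬ IsUnit r := by
    intro hu
    obtain ⟨c, hc, hcr⟩ := Polynomial.isUnit_iff.mp hu
    apply hT
    refine ⟨rootMultiplicity 0 m, ?_⟩
    have h0 : aeval T m = 0 := minpoly.aeval F T
    rw [hmr, ← hcr, map_mul, map_pow, aeval_X, aeval_C] at h0
    have : c • T ^ rootMultiplicity 0 m = 0 := by
      rw [← h0]; ext w; simp [Algebra.smul_def, mul_comm]
    rcases smul_eq_zero.mp this with h | h
    · exact absurd h (by simpa using hc.ne_zero)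
    · exact h
  have hr0 : r ≠ 0 := by
    intro h; rw [h, mul_zero] at hmr; exact hm0 hmr
  obtain ⟨p, hpirr, hpr⟩ := WfDvdMonoid.exists_irreducible_factor hrnu hr0
  have hp0 : p.coeff 0 ≠ 0 := by
    intro h
    exact hXr (dvd_trans (Polynomial.X_dvd_iff.mpr h) hpr)
  have hpm : p ∣ m := hpr.trans ⟨_, hmr.trans (mul_comm _ _)⟩
  -- normalize to monic
  have hpne : p ≠ 0 := hpirr.ne_zero
  set q := p * C p.leadingCoeff⁻¹ with hq
  have hlc : p.leadingCoeff ≠ 0 := leadingCoeff_ne_zero.mpr hpne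
  have hqmonic : q.Monic := monic_mul_leadingCoeff_inv hpne
  have hassoc : Associated p q :=
    associated_mul_unit_right p _ (isUnit_C.mpr (isUnit_iff_ne_zero.mpr (inv_ne_zero hlc)))
  have hqirr : Irreducible q := hassoc.irreducible hpirr
  have hq0 : q.coeff 0 ≠ 0 := by
    rw [hq, coeff_mul_C]
    exact mul_ne_zero hp0 (inv_ne_zero hlc)
  have hqm : q ∣ m := (hassoc.symm.dvd).trans hpm
  refine ⟨q, hqirr, hqmonic, hq0, ?_⟩
  -- kernel of aeval T q is nonzero
  by_contra hker
  push_neg at hker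
  have hinj : LinearMap.ker (aeval T q) = ⊥ := by
    rw [LinearMap.ker_eq_bot']
    intro v hv
    by_contra hv0
    exact hker v hv0 hv
  have hunit : IsUnit (aeval T q) := (LinearMap.isUnit_iff_ker_eq_bot _).mpr hinj
  obtain ⟨s, hs⟩ := hqm
  have h0 : aeval T q * aeval T s = 0 := by
    rw [← map_mul, ← hs]; exact minpoly.aeval F T
  have hs0' : aeval T s = 0 := (hunit.mul_right_eq_zero).mp h0
  have hms : m ∣ s := minpoly.dvd F T hs0'
  have hsne : s ≠ 0 := by
    intro h; rw [h, mul_zero] at hs; exact hm0 hs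
  have h1 : m.natDegree ≤ s.natDegree := Polynomial.natDegree_le_of_dvd hms hsne
  have h2 : m.natDegree = q.natDegree + s.natDegree := by
    rw [hs, Polynomial.natDegree_mul hqirr.ne_zero hsne]
  have h3 : 0 < q.natDegree := hqirr.natDegree_pos
  omega

lemma cyclic_aux {F L : Type*} [Field F] [AddCommGroup L] [Module F L] [FiniteDimensional F L]
    (T : Module.End F L) (hT : ¬ IsNilpotent T) :
    ∃ (k : ℕ) (v : L) (c : ℕ → F),
      LinearIndependent F (fun i : Fin (k + 1) => (T ^ (i : ℕ)) v) ∧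
      ((T ^ (k + 1)) v = ∑ i ∈ Finset.range (k + 1), c i • (T ^ i) v) ∧
      c 0 ≠ 0 ∧
      Irreducible ((X ^ (k + 1) - ∑ i ∈ Finset.range (k + 1), C (c i) * X ^ i : F[X])) := by
  obtain ⟨p, hpirr, hpm, hp0, v, hv0, hpv⟩ := exists_irred_factor T hT
  obtain ⟨k, hk⟩ : ∃ k, p.natDegree = k + 1 :=
    ⟨p.natDegree - 1, by have := hpirr.natDegree_pos; omega⟩
  have hP : (X ^ (k + 1) - ∑ i ∈ Finset.range (k + 1), C (-(p.coeff i)) * X ^ i : F[X]) = p := by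
    have hsum : (∑ i ∈ Finset.range (k + 1), C (-(p.coeff i)) * X ^ i : F[X])
        = -∑ i ∈ Finset.range (k + 1), C (p.coeff i) * X ^ i := by
      rw [← Finset.sum_neg_distrib]
      exact Finset.sum_congr rfl (fun i _ => by rw [map_neg, neg_mul])
    have hc1 : p.coeff (k + 1) = 1 := by
      have := hpm.coeff_natDegree
      rwa [hk] at this
    rw [hsum, sub_neg_eq_add]
    conv_rhs => rw [p.as_sum_range_C_mul_X_pow, hk, Finset.sum_range_succ]
    rw [hc1, map_one, one_mul, add_comm]
  have haq : ∀ q : F[X], (aeval T q) v = 0 → q ≠ 0 → q.natDegree ≤ k → False := by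
    intro q hqv hq0 hqd
    have hnd : ¬ p ∣ q := by
      intro hdvd
      have := Polynomial.natDegree_le_of_dvd hdvd hq0
      omega
    obtain ⟨u, w, huw⟩ := (hpirr.coprime_iff_not_dvd).mpr hnd
    have := congrArg (fun r : F[X] => (aeval T r) v) huw
    simp only [map_add, map_mul, map_one, LinearMap.add_apply, Module.End.mul_apply,
      hpv, hqv, map_zero, Module.End.one_apply, add_zero] at this
    exact hv0 this.symm
  refine ⟨k, v, fun i => -(p.coeff i), ?_, ?_, neg_ne_zero.mpr hp0, by rw [hP]; exact hpirr⟩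
  · rw [Fintype.linearIndependent_iff]
    intro g hg i
    by_contra hgi
    set q : F[X] := ∑ j : Fin (k + 1), C (g j) * X ^ (j : ℕ) with hqdef
    have hqv : (aeval T q) v = 0 := by
      rw [hqdef]
      simpa [map_sum, map_mul, aeval_C, aeval_X_pow, LinearMap.sum_apply,
        Module.End.mul_apply, Module.algebraMap_end_apply] using hg
    have hcoeff : q.coeff (i : ℕ) = g i := by
      rw [hqdef, Polynomial.finset_sum_coeff]
      rw [Finset.sum_eq_single i]
      · simp [Polynomial.coeff_C_mul, Polynomial.coeff_X_pow]
      · intro j _ hji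
        have hij : (↑i : ℕ) ≠ ↑j := fun h => hji (Fin.ext h.symm)
        simp [Polynomial.coeff_C_mul, Polynomial.coeff_X_pow, hij]
      · simp
    have hq0 : q ≠ 0 := fun h => hgi (by rw [← hcoeff, h, Polynomial.coeff_zero])
    have hqd : q.natDegree ≤ k := by
      apply Polynomial.natDegree_sum_le_of_forall_le
      intro j _
      exact (Polynomial.natDegree_C_mul_le _ _).trans (by simp [Polynomial.natDegree_X_pow]; omega)
    exact haq q hqv hq0 hqd
  · have h0 : (aeval T (X ^ (k + 1) - ∑ i ∈ Finset.range (k + 1), C (-(p.coeff i)) * X ^ i : F[X])) v = 0 := by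
      rw [hP]; exact hpv
    have h1 : (T ^ (k + 1)) v - ∑ i ∈ Finset.range (k + 1), (-(p.coeff i)) • (T ^ i) v = 0 := by
      simpa only [map_sub, map_sum, map_mul, map_pow, aeval_X, aeval_C,
        LinearMap.sub_apply, LinearMap.sum_apply, Module.End.mul_apply,
        Module.algebraMap_end_apply] using h0
    exact sub_eq_zero.mp h1

attribute [local instance 100] LieRing.ofAssociativeRing

lemma engel_aux {F L : Type*} [Field F] [AddCommGroup L] [Module F L] [FiniteDimensional F L]
    (B : L →ₗ[F] L →ₗ[F] L) (hB : LeibnizId B) (hnil : ∀ x : L, IsNilpotent (B x)) :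
    LeibIsNilpotent B := by
  let K : LieSubalgebra F (Module.End F L) :=
    { LinearMap.range B with
      lie_mem' := by
        rintro x y hx hy
        obtain ⟨a, rfl⟩ := hx
        obtain ⟨b, rfl⟩ := hy
        refine ⟨B a b, ?_⟩
        ext c
        simp only [Ring.lie_def, LinearMap.sub_apply, Module.End.mul_apply]
        rw [hB a b c]
        abel }
  have hnilM : ∀ y : K, IsNilpotent (LieModule.toEnd F K L y) := by
    rintro ⟨f, a, rfl⟩
    have heq : LieModule.toEnd F K L ⟨B a, ⟨a, rfl⟩⟩ = B a := by
      ext m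
      rw [LieModule.toEnd_apply_apply, LieSubalgebra.coe_bracket_of_module]
      rfl
    rw [heq]
    exact hnil a
  have hEng : LieModule.IsNilpotent K L :=
    LieAlgebra.isEngelian_of_isNoetherian L hnilM
  obtain ⟨n, hn⟩ := (LieModule.isNilpotent_iff F K L).mp hEng
  have hle : ∀ m : ℕ, leibLCS B m ≤ (LieModule.lowerCentralSeries F K L m : Submodule F L) := by
    intro m
    induction m with
    | zero => simp [leibLCS]
    | succ m ih =>
      show lbrk B ⊤ (leibLCS B m) ≤ _
      rw [lbrk, Submodule.span_le]
      rintro z ⟨s, -, t, ht, rfl⟩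
      rw [SetLike.mem_coe, LieSubmodule.mem_toSubmodule, LieModule.lowerCentralSeries_succ]
      exact LieSubmodule.lie_mem_lie (LieSubmodule.mem_top (⟨B s, ⟨s, rfl⟩⟩ : K))
        ((LieSubmodule.mem_toSubmodule _).mp (ih ht))
  refine ⟨n, le_bot_iff.mp ?_⟩
  have := hle n
  rwa [hn, LieSubmodule.bot_toSubmodule] at this

end EngelAux

lemma engel_exists {F L : Type*} [Field F] [AddCommGroup L] [Module F L] [FiniteDimensional F L]
    (B : L →ₗ[F] L →ₗ[F] L) (hB : LeibnizId B) (hnn : ¬ LeibIsNilpotent B) :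
    ∃ x : L, ¬ IsNilpotent (B x) := by
  by_contra h
  push_neg at h
  exact hnn (engel_aux B hB h)

/-- in a finite-dimensional minimal nonnilpotent Leibniz algebra there exist
`x` and linearly independent `a₀, …, a_k` with `[x,aᵢ] = a_{i+1}` for `i < k`,
`[x,a_k] = c₀a₀ + ⋯ + c_k a_k` with `c₀ ≠ 0`, and
`p(λ) = λ^{k+1} − c_kλ^k − ⋯ − c₀` irreducible. -/
theorem stmt11 {F L : Type*} [Field F] [AddCommGroup L] [Module F L] [FiniteDimensional F L]
    (B : L →ₗ[F] L →ₗ[F] L) (hB : LeibnizId B) (hmin : MinNonnilpotent B) :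
    ∃ (k : ℕ) (x : L) (a : ℕ → L) (c : ℕ → F),
      LinearIndependent F (fun i : Fin (k + 1) => a i) ∧
      (∀ i < k, B x (a i) = a (i + 1)) ∧
      (B x (a k) = ∑ i ∈ Finset.range (k + 1), c i • a i) ∧
      c 0 ≠ 0 ∧
      Irreducible
        ((Polynomial.X ^ (k + 1)
          - ∑ i ∈ Finset.range (k + 1), Polynomial.C (c i) * Polynomial.X ^ i :
            Polynomial F)) := by
  obtain ⟨x, hx⟩ := engel_exists B hB hmin.1
  obtain ⟨k, v, c, hli, hrec, hc0, hirr⟩ := cyclic_aux (B x) hx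
  refine ⟨k, x, fun i => ((B x) ^ i) v, c, hli, ?_, ?_, hc0, hirr⟩
  · intro i _
    show (B x) ((B x ^ i) v) = (B x ^ (i + 1)) v
    rw [pow_succ']
    rfl
  · show (B x) ((B x ^ k) v) = _
    rw [show (B x) ((B x ^ k) v) = (B x ^ (k + 1)) v by rw [pow_succ']; rfl]
    exact hrec
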